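/- Let u₁, ..., u_n be unit vectors in ℝ^N (N ≥ 1) whose average z = (1/n)·Σᵢ uᵢ satisfies |z| ≤ 1 − 2b for some b ∈ (0, 1/2). Then for every index i, the number of indices l ∈ {1,...,n} with ⟨uᵢ, u_l⟩ ≤ 1 − b is at least B·n, where B = b/(4 − 2b). -/
import Mathlib


open RealInnerProductSpace

theorem many_nonaligned_indices
    (N n : ℕ) (hn : 0 < n) (b : ℝ) (hb : 0 < b) (hb' : b < 1/2)
    (u : Fin n → EuclideanSpace ℝ (Fin N)) (hu : ∀ i, ‖u i‖ = 1)
    (hz : ‖((n : ℝ))⁻¹ • ∑ i, u i‖ ≤ 1 - 2 * b) :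
    ∀ i : Fin n,
      (b / (4 - 2 * b)) * n ≤
        ((Finset.univ.filter (fun l : Fin n => ⟪u i, u l⟫ ≤ 1 - b)).card : ℝ) := by
  intro i
  set S := Finset.univ.filter (fun l : Fin n => ⟪u i, u l⟫ ≤ 1 - b) with hSdef
  have hnpos : (0:ℝ) < n := by exact_mod_cast hn
  -- total sum bound
  have hsum_le : ∑ l, ⟪u i, u l⟫ ≤ (n:ℝ) * (1 - 2*b) := by
    have h1 : ∑ l, ⟪u i, u l⟫ = (n:ℝ) * ⟪u i, (n:ℝ)⁻¹ • ∑ l, u l⟫ := by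
      rw [inner_smul_right, inner_sum]
      field_simp
    have h2 : ⟪u i, (n:ℝ)⁻¹ • ∑ l, u l⟫ ≤ 1 - 2*b := by
      calc ⟪u i, (n:ℝ)⁻¹ • ∑ l, u l⟫ ≤ ‖u i‖ * ‖(n:ℝ)⁻¹ • ∑ l, u l‖ :=
            real_inner_le_norm _ _
        _ ≤ 1 - 2*b := by rw [hu i, one_mul]; exact hz
    rw [h1]
    nlinarith
  have hlb : ∀ l : Fin n, (-1:ℝ) ≤ ⟪u i, u l⟫ := by
    intro l
    have h := abs_real_inner_le_norm (u i) (u l)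
    rw [hu i, hu l] at h
    have := neg_abs_le ⟪u i, u l⟫
    linarith
  -- split the sum
  have hsplit : ∑ l, ⟪u i, u l⟫ =
      (∑ l ∈ S, ⟪u i, u l⟫) + ∑ l ∈ Sᶜ, ⟪u i, u l⟫ :=
    (Finset.sum_add_sum_compl S _).symm
  have hS1 : (S.card : ℝ) * (-1) ≤ ∑ l ∈ S, ⟪u i, u l⟫ := by
    have := Finset.card_nsmul_le_sum S (fun l => ⟪u i, u l⟫) (-1)
      (fun l _ => hlb l)
    simpa [nsmul_eq_mul] using this
  have hS2 : (Sᶜ.card : ℝ) * (1 - b) ≤ ∑ l ∈ Sᶜ, ⟪u i, u l⟫ := by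
    have := Finset.card_nsmul_le_sum Sᶜ (fun l => ⟪u i, u l⟫) (1 - b)
      (fun l hl => by
        have : ¬ (⟪u i, u l⟫ ≤ 1 - b) := by
          simpa [hSdef] using (Finset.mem_compl.mp hl)
        linarith)
    simpa [nsmul_eq_mul] using this
  have hcard : (Sᶜ.card : ℝ) = (n : ℝ) - S.card := by
    have hle : S.card ≤ n := by simpa using Finset.card_le_univ S
    rw [Finset.card_compl, Fintype.card_fin, Nat.cast_sub hle]
  have hkey : (n:ℝ) * b ≤ (S.card : ℝ) * (2 - b) := by nlinarith
  have hk0 : (0:ℝ) ≤ (S.card : ℝ) := Nat.cast_nonneg _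
  rw [div_mul_eq_mul_div, div_le_iff₀ (by linarith : (0:ℝ) < 4 - 2*b)]
  nlinarith
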